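/- For each integer β ≥ 2 define k₁(β) = min_{α>0} (1 + α + α^{1+β})²/α. Then k₁ is a nonincreasing function of β on the integers β ≥ 2, and 4 ≤ k₁(β) ≤ 5.27 for all β ≥ 2. -/
import Mathlib


/-- `k₁(β) = min_{α>0} (1+α+α^(1+β))²/α` is nonincreasing in `β ≥ 2` and lies
in `[4, 5.27]`. -/
theorem stmt_11 (k₁ : ℕ → ℝ)
    (hk₁ : ∀ β, k₁ β = sInf ((fun α : ℝ => (1 + α + α^(1+β))^2 / α) '' Set.Ioi 0)) :
    ∀ β : ℕ, 2 ≤ β → k₁ (β + 1) ≤ k₁ β ∧ 4 ≤ k₁ β ∧ k₁ β ≤ 5.27 := by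
  have hlb : ∀ b : ℕ, ∀ y ∈ ((fun α : ℝ => (1 + α + α^(1+b))^2 / α) '' Set.Ioi 0),
      (4:ℝ) ≤ y := by
    rintro b y ⟨α, hα, rfl⟩
    simp only [Set.mem_Ioi] at hα
    rw [le_div_iff₀ hα]
    nlinarith [pow_nonneg hα.le (1+b), sq_nonneg (1-α), sq_nonneg (α^(1+b))]
  have hbdd : ∀ b : ℕ, BddBelow ((fun α : ℝ => (1 + α + α^(1+b))^2 / α) '' Set.Ioi 0) :=
    fun b => ⟨4, hlb b⟩
  have hne : ∀ b : ℕ, ((fun α : ℝ => (1 + α + α^(1+b))^2 / α) '' Set.Ioi 0).Nonempty :=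
    fun b => ⟨_, ⟨1, by norm_num, rfl⟩⟩
  intro β hβ
  refine ⟨?_, ?_, ?_⟩
  · rw [hk₁, hk₁]
    apply le_csInf (hne β)
    rintro y ⟨α, hα, rfl⟩
    simp only [Set.mem_Ioi] at hα
    rcases le_or_gt α 1 with h1 | h1
    · refine le_trans (csInf_le (hbdd _) ⟨α, hα, rfl⟩) ?_
      have hp : α ^ (1 + (β + 1)) ≤ α ^ (1 + β) :=
        pow_le_pow_of_le_one hα.le h1 (by omega)
      have h0 : (0:ℝ) ≤ 1 + α + α ^ (1 + (β + 1)) := by positivity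
      apply div_le_div_of_nonneg_right _ hα.le
      · exact pow_le_pow_left₀ h0 (by linarith) 2
    · refine le_trans (csInf_le (hbdd _) ⟨1, by norm_num, rfl⟩) ?_
      dsimp only
      have h9 : ((1:ℝ) + 1 + 1 ^ (1 + (β + 1))) ^ 2 / 1 = 9 := by norm_num
      rw [h9, le_div_iff₀ hα]
      have hp : α ≤ α ^ (1 + β) := le_self_pow₀ h1.le (by omega)
      nlinarith [sq_nonneg (α - 1), hα.le]
  · rw [hk₁]
    exact le_csInf (hne β) (hlb β)
  · rw [hk₁]
    refine le_trans (csInf_le (hbdd β) ⟨189/400, by norm_num, rfl⟩) ?_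
    have hp : ((189:ℝ)/400) ^ (1 + β) ≤ ((189:ℝ)/400) ^ 3 :=
      pow_le_pow_of_le_one (by norm_num) (by norm_num) (by omega)
    have h0 : (0:ℝ) ≤ 1 + 189/400 + ((189:ℝ)/400) ^ (1 + β) := by positivity
    have hnum : (1 + 189/400 + ((189:ℝ)/400) ^ (1 + β)) ^ 2
        ≤ (1 + 189/400 + ((189:ℝ)/400) ^ 3) ^ 2 :=
      pow_le_pow_left₀ h0 (by linarith) 2
    have : (1 + 189/400 + ((189:ℝ)/400) ^ (1 + β)) ^ 2 / (189/400)
        ≤ (1 + 189/400 + ((189:ℝ)/400) ^ 3) ^ 2 / (189/400) :=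
      div_le_div_of_nonneg_right hnum (by norm_num)
    refine le_trans this ?_
    norm_num
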